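/- arXiv:1612.01484 — 4 statements merged into one kernel-verified Lean document; each statement's English description precedes it below -/
import Mathlib

section
/- Let L be a Lie algebra over ℂ, and let y, h_1, …, h_n ∈ L and scalars c_1, …, c_n ∈ ℂ satisfy ⁅h_i, h_j⁆ = 0 for all 1 ≤ i, j ≤ n and ⁅y, h_i⁆ = c_i • y for all 1 ≤ i ≤ n. Then for all non-negative integers p, q_1, …, q_n, the following identity holds in the universal enveloping algebra U of the loop algebra of L: ι(y t^p) · ∏_{i=1}^n ι(h_i t^{−q_i}) = Σ_{A ⊆ {1,…,n}} (∏_{i∈A} c_i) · (∏_{i∈{1,…,n}∖A} ι(h_i t^{−q_i})) · ι(y t^{p − Σ_{i∈A} q_i}). -/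
/- The loop algebra of a complex Lie algebra `L` is the base change
`ℂ[t,t⁻¹] ⊗[ℂ] L`; it is a Lie algebra over `ℂ`. -/

open scoped TensorProduct

noncomputable instance loopLieAlgebra (L : Type*) [LieRing L] [LieAlgebra ℂ L] :
    LieAlgebra ℂ (LaurentPolynomial ℂ ⊗[ℂ] L) where
  lie_smul c x y := by
    rw [← algebraMap_smul (LaurentPolynomial ℂ) c y,
      LieAlgebra.lie_smul ((algebraMap ℂ (LaurentPolynomial ℂ)) c) x y, algebraMap_smul]

section Aux

open Finset

private lemma ncp_congr {M : Type*} [Monoid M] {m₁ m₂ : Multiset M} (h : m₁ = m₂) (c₁ c₂) :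
    m₁.noncommProd c₁ = m₂.noncommProd c₂ := by subst h; rfl

private lemma ncp_map {α β M : Type*} [Monoid M] (s : Finset α) (e : α ↪ β) (f : β → M)
    (comm comm') : (s.map e).noncommProd f comm = s.noncommProd (f ∘ e) comm' := by
  simp [Finset.noncommProd, Finset.map_val, Multiset.map_map]

private lemma sortProd_eq_ncp {α M : Type*} [LinearOrder α] [Monoid M] (s : Finset α)
    (f : α → M) (comm) : ((s.sort (· ≤ ·)).map f).prod = s.noncommProd f comm := by
  have h1 : (Multiset.map f s.val) = (((s.sort (· ≤ ·)).map f : List M) : Multiset M) :=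
    (congrArg (Multiset.map f) (Finset.sort_eq s (· ≤ ·)).symm).trans (Multiset.map_coe f _)
  rw [Finset.noncommProd, ncp_congr h1 _ (h1 ▸ Finset.noncommProd_lemma s f comm),
    Multiset.noncommProd_coe]

private lemma sum_split {M : Type*} [AddCommMonoid M] (n : ℕ) (f : Finset (Fin (n+1)) → M) :
    ∑ A : Finset (Fin (n+1)), f A =
      ∑ B : Finset (Fin n), (f (B.map ⟨Fin.succ, Fin.succ_injective n⟩)
        + f (insert 0 (B.map ⟨Fin.succ, Fin.succ_injective n⟩))) := by
  classical
  set e : Fin n ↪ Fin (n+1) := ⟨Fin.succ, Fin.succ_injective n⟩ with he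
  have h0 : ∀ C : Finset (Fin n), (0 : Fin (n+1)) ∉ C.map e := by
    intro C hC
    obtain ⟨j, -, hj⟩ := mem_map.1 hC
    exact Fin.succ_ne_zero j hj
  have hg : Function.Bijective (fun x : Bool × Finset (Fin n) =>
      if x.1 then insert 0 (x.2.map e) else x.2.map e) := by
    constructor
    · rintro ⟨b, B⟩ ⟨b', B'⟩ hEq
      simp only at hEq
      have hmem : ∀ (b : Bool) (B : Finset (Fin n)),
          ((0:Fin (n+1)) ∈ (if b then insert 0 (B.map e) else B.map e)) ↔ b = true := by
        rintro (_|_) B <;> simp [h0 B]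
      have hb : b = b' := by
        have h1 := hmem b B
        rw [hEq, hmem b' B'] at h1
        rcases b <;> rcases b' <;> simp_all
      subst hb
      rcases b with _ | _
      · simp only [Bool.false_eq_true, if_false] at hEq
        exact Prod.ext rfl (Finset.map_injective e hEq)
      · simp only [if_true] at hEq
        have := congrArg (fun s => Finset.erase s 0) hEq
        simp only [erase_insert (h0 B), erase_insert (h0 B')] at this
        exact Prod.ext rfl (Finset.map_injective e this)
    · intro A
      refine ⟨⟨decide ((0 : Fin (n+1)) ∈ A), (univ.filter (fun i => e i ∈ A))⟩, ?_⟩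
      have hmap : (univ.filter (fun i => e i ∈ A)).map e = A.erase 0 := by
        ext x
        refine Fin.cases ?_ (fun j => ?_) x <;> simp [he, Fin.succ_ne_zero, eq_comm]
      by_cases h0A : (0 : Fin (n+1)) ∈ A
      · simp only [h0A, decide_eq_true_eq, if_true, hmap]
        exact insert_erase h0A
      · simp only [h0A, decide_eq_true_eq, Bool.false_eq_true, if_false, hmap]
        exact erase_eq_of_notMem h0A
  calc ∑ A : Finset (Fin (n+1)), f A
      = ∑ x : Bool × Finset (Fin n), f (if x.1 then insert 0 (x.2.map e) else x.2.map e) :=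
        (Fintype.sum_bijective _ hg _ f (fun x => rfl)).symm
    _ = ∑ b : Bool, ∑ B : Finset (Fin n), f (if b then insert 0 (B.map e) else B.map e) := by
        rw [Fintype.sum_prod_type]
    _ = _ := by
        rw [Fintype.sum_bool, ← Finset.sum_add_distrib]
        simp [add_comm]

private lemma key {U : Type*} [Ring U] [Algebra ℂ U] (Y : ℤ → U) (n : ℕ) :
    ∀ (H : Fin n → U) (c : Fin n → ℂ) (q : Fin n → ℤ)
      (hcomm : ∀ i j, Commute (H i) (H j))
      (_ : ∀ i s, Y s * H i = H i * Y s + c i • Y (s - q i)) (s : ℤ),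
    Y s * (List.ofFn H).prod =
      ∑ A : Finset (Fin n), (∏ i ∈ A, c i) •
        ((Finset.univ \ A).noncommProd H (fun i _ j _ _ => hcomm i j) * Y (s - ∑ i ∈ A, q i)) := by
  induction n with
  | zero =>
    intro H c q hcomm hY s
    rw [show (Finset.univ : Finset (Finset (Fin 0))) = {∅} from rfl]
    simp
  | succ n ih =>
    intro H c q hcomm hY s
    set e : Fin n ↪ Fin (n+1) := ⟨Fin.succ, Fin.succ_injective n⟩ with he
    have h0 : ∀ C : Finset (Fin n), (0 : Fin (n+1)) ∉ C.map e := by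
      intro C hC
      obtain ⟨j, -, hj⟩ := mem_map.1 hC
      exact Fin.succ_ne_zero j hj
    have hcomm' : ∀ i j : Fin n, Commute (H i.succ) (H j.succ) := fun i j => hcomm _ _
    have hY' : ∀ (i : Fin n) (s : ℤ), Y s * H i.succ = H i.succ * Y s + c i.succ • Y (s - q i.succ) :=
      fun i s => hY i.succ s
    have sdiff1 : ∀ B : Finset (Fin n),
        (univ : Finset (Fin (n+1))) \ (B.map e) = insert 0 ((univ \ B).map e) := by
      intro B
      ext x
      refine Fin.cases ?_ (fun j => ?_) x <;> simp [he, Fin.succ_ne_zero, eq_comm]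
    have sdiff2 : ∀ B : Finset (Fin n),
        (univ : Finset (Fin (n+1))) \ insert 0 (B.map e) = (univ \ B).map e := by
      intro B
      ext x
      refine Fin.cases ?_ (fun j => ?_) x <;> simp [he, Fin.succ_ne_zero, eq_comm]
    rw [List.ofFn_succ, List.prod_cons, ← mul_assoc, hY 0 s, add_mul, mul_assoc, smul_mul_assoc,
      ih (fun i => H i.succ) (fun i => c i.succ) (fun i => q i.succ) hcomm' hY',
      ih (fun i => H i.succ) (fun i => c i.succ) (fun i => q i.succ) hcomm' hY' (s - q 0),
      Finset.mul_sum, Finset.smul_sum, sum_split, ← Finset.sum_add_distrib]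
    refine Finset.sum_congr rfl fun B _ => ?_
    have hins : (0 : Fin (n+1)) ∉ (univ \ B).map e := h0 _
    have e1 : ((univ : Finset (Fin (n+1))) \ (B.map e)).noncommProd H
          (fun i _ j _ _ => hcomm i j)
        = H 0 * (univ \ B).noncommProd (fun i => H i.succ) (fun i _ j _ _ => hcomm' i j) := by
      have aux : ∀ comm, (insert 0 ((univ \ B).map e)).noncommProd H comm
          = H 0 * (univ \ B).noncommProd (fun i => H i.succ) (fun i _ j _ _ => hcomm' i j) := by
        intro comm
        rw [Finset.noncommProd_insert_of_notMem _ _ _ _ hins,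
          ncp_map _ e H _ (fun i _ j _ _ => hcomm' i j)]
        rfl
      exact (Finset.noncommProd_congr (sdiff1 B) (fun x _ => rfl) _).trans (aux _)
    have e2 : ((univ : Finset (Fin (n+1))) \ insert 0 (B.map e)).noncommProd H
          (fun i _ j _ _ => hcomm i j)
        = (univ \ B).noncommProd (fun i => H i.succ) (fun i _ j _ _ => hcomm' i j) := by
      have aux : ∀ comm, ((univ \ B).map e).noncommProd H comm
          = (univ \ B).noncommProd (fun i => H i.succ) (fun i _ j _ _ => hcomm' i j) := by
        intro comm
        rw [ncp_map _ e H _ (fun i _ j _ _ => hcomm' i j)]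
        rfl
      exact (Finset.noncommProd_congr (sdiff2 B) (fun x _ => rfl) _).trans (aux _)
    rw [e1, e2, Finset.prod_map, Finset.sum_map, Finset.prod_insert (h0 B), Finset.sum_insert (h0 B),
      Finset.prod_map, Finset.sum_map]
    simp only [he, Function.Embedding.coeFn_mk]
    rw [mul_smul_comm, ← mul_assoc, smul_smul, sub_sub]

private lemma hbr (L : Type*) [LieRing L] [LieAlgebra ℂ L] (a b : ℤ) (x z : L) :
    UniversalEnvelopingAlgebra.ι ℂ ((LaurentPolynomial.T a : LaurentPolynomial ℂ) ⊗ₜ[ℂ] x) *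
      UniversalEnvelopingAlgebra.ι ℂ ((LaurentPolynomial.T b : LaurentPolynomial ℂ) ⊗ₜ[ℂ] z) -
    UniversalEnvelopingAlgebra.ι ℂ ((LaurentPolynomial.T b : LaurentPolynomial ℂ) ⊗ₜ[ℂ] z) *
      UniversalEnvelopingAlgebra.ι ℂ ((LaurentPolynomial.T a : LaurentPolynomial ℂ) ⊗ₜ[ℂ] x) =
    UniversalEnvelopingAlgebra.ι ℂ
      ((LaurentPolynomial.T (a + b) : LaurentPolynomial ℂ) ⊗ₜ[ℂ] ⁅x, z⁆) := by
  letI : LieRing (UniversalEnvelopingAlgebra ℂ (LaurentPolynomial ℂ ⊗[ℂ] L)) :=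
    LieRing.ofAssociativeRing
  rw [← Ring.lie_def, ← LieHom.map_lie]
  congr 1
  rw [LieAlgebra.ExtendScalars.bracket_tmul, LaurentPolynomial.T_add]

end Aux

/-- If `⁅h i, h j⁆ = 0` and `⁅y, h i⁆ = c i • y` in `L`, then in the
universal enveloping algebra of the loop algebra of `L` we have
`ι(y tᵖ) ⬝ ∏ᵢ ι(hᵢ t^{-qᵢ}) = ∑_{A ⊆ [n]} (∏_{i∈A} cᵢ) ⬝ (∏_{i∉A} ι(hᵢ t^{-qᵢ})) ⬝
ι(y t^{p - ∑_{i∈A} qᵢ})`. -/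


theorem statement0 (L : Type*) [LieRing L] [LieAlgebra ℂ L]
    (n : ℕ) (y : L) (h : Fin n → L) (c : Fin n → ℂ)
    (hcomm : ∀ i j : Fin n, ⁅h i, h j⁆ = 0)
    (hy : ∀ i : Fin n, ⁅y, h i⁆ = c i • y)
    (p : ℕ) (q : Fin n → ℕ) :
    UniversalEnvelopingAlgebra.ι ℂ ((LaurentPolynomial.T (p : ℤ) : LaurentPolynomial ℂ) ⊗ₜ[ℂ] y) *
      (List.ofFn fun i : Fin n =>
        UniversalEnvelopingAlgebra.ι ℂ ((LaurentPolynomial.T (-(q i : ℤ)) : LaurentPolynomial ℂ) ⊗ₜ[ℂ] h i)).prod =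
    ∑ A : Finset (Fin n), (∏ i ∈ A, c i) •
      ((((Finset.univ \ A).sort (· ≤ ·)).map (fun i : Fin n =>
          UniversalEnvelopingAlgebra.ι ℂ ((LaurentPolynomial.T (-(q i : ℤ)) : LaurentPolynomial ℂ) ⊗ₜ[ℂ] h i))).prod *
        UniversalEnvelopingAlgebra.ι ℂ
          ((LaurentPolynomial.T ((p : ℤ) - ∑ i ∈ A, (q i : ℤ)) : LaurentPolynomial ℂ) ⊗ₜ[ℂ] y)) := by
  classical
  set Y : ℤ → UniversalEnvelopingAlgebra ℂ (LaurentPolynomial ℂ ⊗[ℂ] L) :=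
    fun s => UniversalEnvelopingAlgebra.ι ℂ ((LaurentPolynomial.T s : LaurentPolynomial ℂ) ⊗ₜ[ℂ] y)
    with hYdef
  set H : Fin n → UniversalEnvelopingAlgebra ℂ (LaurentPolynomial ℂ ⊗[ℂ] L) :=
    fun i => UniversalEnvelopingAlgebra.ι ℂ
      ((LaurentPolynomial.T (-(q i : ℤ)) : LaurentPolynomial ℂ) ⊗ₜ[ℂ] h i) with hHdef
  have hcommU : ∀ i j, Commute (H i) (H j) := by
    intro i j
    have := hbr L (-(q i : ℤ)) (-(q j : ℤ)) (h i) (h j)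
    rw [hcomm i j, TensorProduct.tmul_zero, map_zero (UniversalEnvelopingAlgebra.ι ℂ), sub_eq_zero] at this
    exact this
  have hYU : ∀ (i : Fin n) (s : ℤ), Y s * H i = H i * Y s + c i • Y (s - (q i : ℤ)) := by
    intro i s
    have := hbr L s (-(q i : ℤ)) y (h i)
    rw [hy i, TensorProduct.tmul_smul, map_smul (UniversalEnvelopingAlgebra.ι ℂ)] at this
    rw [sub_eq_iff_eq_add'] at this
    rw [hYdef, hHdef]
    simpa [sub_eq_add_neg] using this
  have hmain := key Y n H c (fun i => (q i : ℤ)) hcommU hYU (p : ℤ)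
  rw [hmain]
  refine Finset.sum_congr rfl fun A _ => ?_
  rw [sortProd_eq_ncp (Finset.univ \ A) H (fun i _ j _ _ => hcommU i j)]
end

section
/- Let L be a Lie algebra over ℂ, and let y, h_1, …, h_n ∈ L and scalars c_1, …, c_n ∈ ℂ satisfy ⁅h_i, h_j⁆ = 0 for all 1 ≤ i, j ≤ n and ⁅y, h_i⁆ = c_i • y for all 1 ≤ i ≤ n. Then for all non-negative integers p_1, …, p_m and q_1, …, q_n, the following identity holds in the universal enveloping algebra U of the loop algebra of L: (∏_{j=1}^m ι(y t^{p_j})) · (∏_{i=1}^n ι(h_i t^{−q_i})) = Σ (∏_{i ∈ A_1∪…∪A_m} c_i) · (∏_{i ∈ {1,…,n}∖(A_1∪…∪A_m)} ι(h_i t^{−q_i})) · (∏_{j=1}^m ι(y t^{p_j − Σ_{i∈A_j} q_i})), where the sum runs over all m-tuples (A_1, …, A_m) of pairwise disjoint subsets of {1,…,n}. -/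
open scoped TensorProduct Classical

set_option linter.unusedSectionVars false

section Aux

variable {U : Type*} [Ring U] [Algebra ℂ U] {n : ℕ}
  (Y : ℤ → U) (H : Fin n → U) (c : Fin n → ℂ) (q : Fin n → ℕ)

/-- Commuting product of `H` over a finset, with the proof bundled. -/
noncomputable def auxHP (hHH : ∀ i j, Commute (H i) (H j)) (S : Finset (Fin n)) : U :=
  S.noncommProd H (fun i _ j _ _ => hHH i j)

theorem auxHP_empty (hHH : ∀ i j, Commute (H i) (H j)) : auxHP H hHH ∅ = 1 :=
  Finset.noncommProd_empty _ _

theorem auxHP_insert (hHH : ∀ i j, Commute (H i) (H j)) {a : Fin n} {S : Finset (Fin n)}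
    (ha : a ∉ S) : auxHP H hHH (insert a S) = H a * auxHP H hHH S :=
  Finset.noncommProd_insert_of_notMem _ _ _ _ ha

theorem aux_sort_prod (hHH : ∀ i j, Commute (H i) (H j)) (S : Finset (Fin n)) :
    ((S.sort (· ≤ ·)).map H).prod = auxHP H hHH S := by
  have hm : (S.val.map H) = (((S.sort (· ≤ ·)).map H : List U) : Multiset U) := by
    rw [← Multiset.map_coe, Finset.sort_eq]
  have key : ∀ (m m' : Multiset U) (hmm : m = m') (h h'),
      m.noncommProd h = m'.noncommProd h' := by
    rintro m m' rfl h h'; rfl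
  rw [auxHP]
  unfold Finset.noncommProd
  rw [key _ _ hm _ (by rw [← hm]; exact Finset.noncommProd_lemma S H (fun i _ j _ _ => hHH i j)),
    Multiset.noncommProd_coe]

theorem aux_lemmaA (hHH : ∀ i j, Commute (H i) (H j))
    (hYH : ∀ (s : ℤ) (i : Fin n), Y s * H i = H i * Y s + c i • Y (s - (q i : ℤ)))
    (S : Finset (Fin n)) (s : ℤ) :
    Y s * auxHP H hHH S =
      ∑ A ∈ S.powerset, (∏ i ∈ A, c i) •
        (auxHP H hHH (S \ A) * Y (s - ∑ i ∈ A, (q i : ℤ))) := by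
  induction S using Finset.induction_on generalizing s with
  | empty => simp [auxHP_empty H hHH]
  | @insert a S ha ih =>
    rw [auxHP_insert H hHH ha, ← mul_assoc, hYH,
      add_mul, mul_assoc, ih, smul_mul_assoc, ih, Finset.sum_powerset_insert ha,
      Finset.mul_sum, Finset.smul_sum]
    congr 1
    · refine Finset.sum_congr rfl fun A hA => ?_
      rw [Finset.mem_powerset] at hA
      have haA : a ∉ A := fun hm => ha (hA hm)
      rw [Finset.insert_sdiff_of_notMem _ haA,
        auxHP_insert H hHH (fun hm => ha (Finset.sdiff_subset hm)),
        mul_smul_comm, mul_assoc]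
    · refine Finset.sum_congr rfl fun A hA => ?_
      rw [Finset.mem_powerset] at hA
      have haA : a ∉ A := fun hm => ha (hA hm)
      have h1 : insert a S \ insert a A = S \ A := by
        rw [Finset.insert_sdiff_insert, Finset.sdiff_insert,
          Finset.erase_eq_of_notMem (fun hm => ha (Finset.sdiff_subset hm))]
      rw [h1, Finset.prod_insert haA, Finset.sum_insert haA, smul_smul]
      ring_nf

theorem aux_pairwise_cons {k : ℕ} {A0 : Finset (Fin n)} {A' : Fin k → Finset (Fin n)} :
    Pairwise (fun j j' : Fin (k+1) =>
        Disjoint (Fin.cons (α := fun _ => Finset (Fin n)) A0 A' j)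
          (Fin.cons (α := fun _ => Finset (Fin n)) A0 A' j')) ↔
      (Pairwise (fun j j' : Fin k => Disjoint (A' j) (A' j')) ∧
        ∀ j, Disjoint A0 (A' j)) := by
  constructor
  · intro hp
    refine ⟨fun j j' hne => ?_, fun j => ?_⟩
    · have := hp (i := j.succ) (j := j'.succ) (by simpa using hne)
      simpa using this
    · have := hp (i := 0) (j := j.succ) (Fin.succ_ne_zero j).symm
      simpa using this
  · rintro ⟨h1, h2⟩ j j' hne
    induction j using Fin.cases with
    | zero =>
      induction j' using Fin.cases with
      | zero => exact absurd rfl hne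
      | succ i => simpa using h2 i
    | succ i =>
      induction j' using Fin.cases with
      | zero => simpa using (h2 i).symm
      | succ i' =>
        simpa using h1 (fun hh => hne (by rw [hh]))

theorem aux_biUnion_cons {k : ℕ} (A0 : Finset (Fin n)) (A' : Fin k → Finset (Fin n)) :
    Finset.univ.biUnion (Fin.cons (α := fun _ => Finset (Fin n)) A0 A') =
      A0 ∪ Finset.univ.biUnion A' := by
  ext i
  simp only [Finset.mem_biUnion, Finset.mem_union, Finset.mem_univ, true_and]
  constructor
  · rintro ⟨j, hj⟩
    induction j using Fin.cases with
    | zero => exact Or.inl (by simpa using hj)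
    | succ i' => exact Or.inr ⟨i', by simpa using hj⟩
  · rintro (h0 | ⟨j, hj⟩)
    · exact ⟨0, by simpa⟩
    · exact ⟨j.succ, by simpa⟩

theorem aux_lemmaB (hHH : ∀ i j, Commute (H i) (H j))
    (hYH : ∀ (s : ℤ) (i : Fin n), Y s * H i = H i * Y s + c i • Y (s - (q i : ℤ)))
    (m : ℕ) : ∀ (p : Fin m → ℤ),
    (List.ofFn fun j => Y (p j)).prod * auxHP H hHH Finset.univ =
      ∑ A : Fin m → Finset (Fin n),
        if Pairwise (fun j j' : Fin m => Disjoint (A j) (A j')) then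
          (∏ i ∈ Finset.univ.biUnion A, c i) •
            (auxHP H hHH (Finset.univ \ Finset.univ.biUnion A) *
              (List.ofFn fun j => Y (p j - ∑ i ∈ A j, (q i : ℤ))).prod)
        else 0 := by
  induction m with
  | zero =>
    intro p
    have hconst : ∀ A : Fin 0 → Finset (Fin n),
        (if Pairwise (fun j j' : Fin 0 => Disjoint (A j) (A j')) then
          (∏ i ∈ Finset.univ.biUnion A, c i) •
            (auxHP H hHH (Finset.univ \ Finset.univ.biUnion A) *
              (List.ofFn fun j => Y (p j - ∑ i ∈ A j, (q i : ℤ))).prod)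
        else 0) = auxHP H hHH Finset.univ := by
      intro A
      rw [if_pos (show Pairwise (fun j j' : Fin 0 => Disjoint (A j) (A j'))
        from fun j => j.elim0)]
      simp [Finset.univ_eq_empty (α := Fin 0)]
    rw [Finset.sum_congr rfl (fun A _ => hconst A), Finset.sum_const, Finset.card_univ,
      Fintype.card_unique, one_smul]
    simp
  | succ m ih =>
    intro p
    rw [List.ofFn_succ, List.prod_cons, mul_assoc, ih (fun j => p j.succ), Finset.mul_sum]
    conv_rhs => rw [← Equiv.sum_comp (Fin.consEquiv (fun _ => Finset (Fin n)))]
    rw [Fintype.sum_prod_type, Finset.sum_comm]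
    refine Finset.sum_congr rfl fun A' _ => ?_
    have hcons : ∀ A0 : Finset (Fin n),
        (Fin.consEquiv (fun _ => Finset (Fin n))) (A0, A') = Fin.cons A0 A' := fun _ => rfl
    simp only [hcons]
    by_cases hP : Pairwise (fun j j' : Fin m => Disjoint (A' j) (A' j'))
    · rw [if_pos hP]
      have hcond : ∀ A0 : Finset (Fin n),
          (Pairwise (fun j j' : Fin (m+1) =>
            Disjoint (Fin.cons (α := fun _ => Finset (Fin n)) A0 A' j)
              (Fin.cons (α := fun _ => Finset (Fin n)) A0 A' j'))) ↔
          (∀ j, Disjoint A0 (A' j)) :=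
        fun A0 => (aux_pairwise_cons (A0 := A0) (A' := A')).trans (and_iff_right hP)
      simp only [if_congr (hcond _) rfl rfl]
      have hfilter : (Finset.univ.filter
            (fun A0 : Finset (Fin n) => ∀ j, Disjoint A0 (A' j))) =
          (Finset.univ \ Finset.univ.biUnion A').powerset := by
        ext A0
        simp [Finset.mem_powerset, Finset.subset_sdiff, Finset.disjoint_biUnion_right]
      rw [← Finset.sum_filter, hfilter,
        mul_smul_comm, ← mul_assoc,
        aux_lemmaA Y H c q hHH hYH (Finset.univ \ Finset.univ.biUnion A') (p 0),
        Finset.sum_mul, Finset.smul_sum]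
      refine Finset.sum_congr rfl fun A0 hA0 => ?_
      rw [Finset.mem_powerset, Finset.subset_sdiff] at hA0
      have hdisj : Disjoint A0 (Finset.univ.biUnion A') := hA0.2
      have hsd : Finset.univ \ (A0 ∪ Finset.univ.biUnion A') =
          (Finset.univ \ Finset.univ.biUnion A') \ A0 := by
        ext i; simp; tauto
      rw [aux_biUnion_cons, Finset.prod_union hdisj, hsd, List.ofFn_succ, List.prod_cons]
      simp only [Fin.cons_zero, Fin.cons_succ]
      rw [smul_mul_assoc, smul_smul, mul_assoc,
        mul_comm (∏ i ∈ Finset.univ.biUnion A', c i)]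
    · rw [if_neg hP, mul_zero]
      symm
      refine Finset.sum_eq_zero fun A0 _ => ?_
      rw [if_neg]
      intro hp
      exact hP (aux_pairwise_cons.mp hp).1

end Aux

attribute [local instance 100] LieRing.ofAssociativeRing

/-- If `⁅h i, h j⁆ = 0` and `⁅y, h i⁆ = c i • y` in `L`, then in the
universal enveloping algebra of the loop algebra of `L` we have
`(∏ⱼ ι(y t^{pⱼ})) ⬝ (∏ᵢ ι(hᵢ t^{-qᵢ})) = ∑ (∏_{i∈A₁∪…∪Aₘ} cᵢ) ⬝
(∏_{i∉A₁∪…∪Aₘ} ι(hᵢ t^{-qᵢ})) ⬝ (∏ⱼ ι(y t^{pⱼ - ∑_{i∈Aⱼ} qᵢ}))`, the sum running over all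
`m`-tuples `(A₁, …, Aₘ)` of pairwise disjoint subsets of `{1,…,n}`. -/
theorem statement1 (L : Type*) [LieRing L] [LieAlgebra ℂ L]
    (n m : ℕ) (y : L) (h : Fin n → L) (c : Fin n → ℂ)
    (hcomm : ∀ i j : Fin n, ⁅h i, h j⁆ = 0)
    (hy : ∀ i : Fin n, ⁅y, h i⁆ = c i • y)
    (p : Fin m → ℕ) (q : Fin n → ℕ) :
    (List.ofFn fun j : Fin m =>
        UniversalEnvelopingAlgebra.ι ℂ
          ((LaurentPolynomial.T (p j : ℤ) : LaurentPolynomial ℂ) ⊗ₜ[ℂ] y)).prod *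
      (List.ofFn fun i : Fin n =>
        UniversalEnvelopingAlgebra.ι ℂ
          ((LaurentPolynomial.T (-(q i : ℤ)) : LaurentPolynomial ℂ) ⊗ₜ[ℂ] h i)).prod =
    ∑ A : Fin m → Finset (Fin n),
      if Pairwise (fun j j' : Fin m => Disjoint (A j) (A j')) then
        (∏ i ∈ Finset.univ.biUnion A, c i) •
          ((((Finset.univ \ Finset.univ.biUnion A).sort (· ≤ ·)).map (fun i : Fin n =>
              UniversalEnvelopingAlgebra.ι ℂ
                ((LaurentPolynomial.T (-(q i : ℤ)) : LaurentPolynomial ℂ) ⊗ₜ[ℂ] h i))).prod *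
            (List.ofFn fun j : Fin m =>
              UniversalEnvelopingAlgebra.ι ℂ
                ((LaurentPolynomial.T ((p j : ℤ) - ∑ i ∈ A j, (q i : ℤ)) :
                    LaurentPolynomial ℂ) ⊗ₜ[ℂ] y)).prod)
      else 0 := by
  let Y : ℤ → UniversalEnvelopingAlgebra ℂ (LaurentPolynomial ℂ ⊗[ℂ] L) := fun s =>
    UniversalEnvelopingAlgebra.ι ℂ ((LaurentPolynomial.T s : LaurentPolynomial ℂ) ⊗ₜ[ℂ] y)
  let H : Fin n → UniversalEnvelopingAlgebra ℂ (LaurentPolynomial ℂ ⊗[ℂ] L) := fun i =>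
    UniversalEnvelopingAlgebra.ι ℂ
      ((LaurentPolynomial.T (-(q i : ℤ)) : LaurentPolynomial ℂ) ⊗ₜ[ℂ] h i)
  have hHH : ∀ i j, Commute (H i) (H j) := by
    intro i j
    have hb : ⁅H i, H j⁆ = 0 := by
      show ⁅UniversalEnvelopingAlgebra.ι ℂ _, UniversalEnvelopingAlgebra.ι ℂ _⁆ = 0
      rw [← LieHom.map_lie]
      have h1 : ⁅(LaurentPolynomial.T (-(q i : ℤ)) : LaurentPolynomial ℂ) ⊗ₜ[ℂ] h i,
          (LaurentPolynomial.T (-(q j : ℤ)) : LaurentPolynomial ℂ) ⊗ₜ[ℂ] h j⁆ =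
          ((LaurentPolynomial.T (-(q i : ℤ)) * LaurentPolynomial.T (-(q j : ℤ))) :
            LaurentPolynomial ℂ) ⊗ₜ[ℂ] ⁅h i, h j⁆ := rfl
      rw [h1, hcomm, TensorProduct.tmul_zero, map_zero]
    rw [Ring.lie_def] at hb
    exact sub_eq_zero.mp hb
  have hYH : ∀ (s : ℤ) (i : Fin n), Y s * H i = H i * Y s + c i • Y (s - (q i : ℤ)) := by
    intro s i
    have hb : ⁅Y s, H i⁆ = c i • Y (s - (q i : ℤ)) := by
      show ⁅UniversalEnvelopingAlgebra.ι ℂ _, UniversalEnvelopingAlgebra.ι ℂ _⁆ = _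
      rw [← LieHom.map_lie]
      have h1 : ⁅(LaurentPolynomial.T s : LaurentPolynomial ℂ) ⊗ₜ[ℂ] y,
          (LaurentPolynomial.T (-(q i : ℤ)) : LaurentPolynomial ℂ) ⊗ₜ[ℂ] h i⁆ =
          ((LaurentPolynomial.T s * LaurentPolynomial.T (-(q i : ℤ))) :
            LaurentPolynomial ℂ) ⊗ₜ[ℂ] ⁅y, h i⁆ := rfl
      rw [h1, hy i, ← LaurentPolynomial.T_add, TensorProduct.tmul_smul, map_smul,
        ← sub_eq_add_neg]
    rw [Ring.lie_def] at hb
    exact sub_eq_iff_eq_add'.mp hb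
  have key := aux_lemmaB Y H c q hHH hYH m (fun j => (p j : ℤ))
  simp only [Y, H] at key
  simp only [aux_sort_prod (n := n)
    (fun i => UniversalEnvelopingAlgebra.ι ℂ
      ((LaurentPolynomial.T (-(q i : ℤ)) : LaurentPolynomial ℂ) ⊗ₜ[ℂ] h i)) hHH]
  rw [List.ofFn_eq_map (f := fun i : Fin n =>
      UniversalEnvelopingAlgebra.ι ℂ
        ((LaurentPolynomial.T (-(q i : ℤ)) : LaurentPolynomial ℂ) ⊗ₜ[ℂ] h i)),
    ← Fin.sort_univ n,
    aux_sort_prod (n := n)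
      (fun i => UniversalEnvelopingAlgebra.ι ℂ
        ((LaurentPolynomial.T (-(q i : ℤ)) : LaurentPolynomial ℂ) ⊗ₜ[ℂ] h i)) hHH]
  exact key
end

section
/- Let P be a GT pattern with bounding row λ = (λ_1, …, λ_r, λ_{r+1}) satisfying λ_{r+1} = 0, and weight coordinates a_1, …, a_{r+1}. Define the triangular area △(P) = Σ_{1≤i≤j≤r} d_{i,j}·d'_{i,j} and the trapezoidal area □(P) = Σ_{1≤i≤j≤r} d_{i,j}·(Σ_{p=i}^j d'_{p,j}). Then □(P) = ½·(Σ_{p=1}^{r} λ_p² − Σ_{j=1}^{r+1} a_j²); moreover, for every POP 𝐏 with underlying pattern P, □(P) = △(P) + d(𝐏) − Σ_{1≤i≤j≤r} |π(j)^i|. -/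
/-- The difference `d_{i,j} = λ^{j+1}_i − λ^j_i` of a triangular array
(`lam j i` denotes `λ^j_i`). -/
def dd (lam : ℕ → ℕ → ℤ) (i j : ℕ) : ℤ := lam (j+1) i - lam j i

/-- The difference `d'_{i,j} = λ^j_i − λ^{j+1}_{i+1}`. -/
def dd' (lam : ℕ → ℕ → ℤ) (i j : ℕ) : ℤ := lam j i - lam (j+1) (i+1)

/-- A Gelfand–Tsetlin pattern of rank `r`: an array of integers `λ^j_i`
(`1 ≤ i ≤ j ≤ r+1`) with `λ^{j+1}_i ≥ λ^j_i ≥ λ^{j+1}_{i+1}`. -/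
structure GTPattern (r : ℕ) where
  lam : ℕ → ℕ → ℤ
  ineq₁ : ∀ i j : ℕ, 1 ≤ i → i ≤ j → j ≤ r → lam j i ≤ lam (j+1) i
  ineq₂ : ∀ i j : ℕ, 1 ≤ i → i ≤ j → j ≤ r → lam (j+1) (i+1) ≤ lam j i

/-- The shift of a triangular array by `k`:  `η^j_i = λ^j_i + 2k` if `i = 1 < j`,
`η^j_i = λ^j_i` if `1 < i = j`, and `η^j_i = λ^j_i + k` otherwise. -/
def shiftFun (lam : ℕ → ℕ → ℤ) (k : ℕ) : ℕ → ℕ → ℤ := fun j i =>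
  if i = 1 ∧ 1 < j then lam j i + 2 * k
  else if 1 < i ∧ i = j then lam j i
  else lam j i + k

/-- A partition overlaid pattern (POP) of rank `r`: a GT pattern together with, for each
`1 ≤ i ≤ j ≤ r`, a partition `π(j)^i` (given by its parts `part i j u`, `u ≥ 1`, weakly
decreasing) fitting into the rectangle `(d_{i,j}, d'_{i,j})`: at most `d_{i,j}` parts,
each of size at most `d'_{i,j}`. -/
structure POP (r : ℕ) extends GTPattern r where
  part : ℕ → ℕ → ℕ → ℕ
  part_antitone : ∀ i j u v : ℕ, 1 ≤ u → u ≤ v → part i j v ≤ part i j u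
  part_le : ∀ i j : ℕ, 1 ≤ i → i ≤ j → j ≤ r → ∀ u : ℕ, 1 ≤ u →
    (part i j u : ℤ) ≤ dd' lam i j
  part_vanish : ∀ i j : ℕ, 1 ≤ i → i ≤ j → j ≤ r → ∀ u : ℕ,
    dd lam i j < (u : ℤ) → part i j u = 0

/-- `|π(j)^i|`, the sum of the parts of the overlay partition `π(j)^i`. -/
def partSize (lam : ℕ → ℕ → ℤ) (part : ℕ → ℕ → ℕ → ℕ) (i j : ℕ) : ℤ :=
  ∑ u ∈ Finset.Icc 1 (dd lam i j).toNat, (part i j u : ℤ)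

/-- `d^j_i(Q) = d_{i,j}·(Σ_{p=i+1}^j d'_{p,j}) + |π(j)^i|`. -/
def dji (lam : ℕ → ℕ → ℤ) (part : ℕ → ℕ → ℕ → ℕ) (i j : ℕ) : ℤ :=
  dd lam i j * (∑ p ∈ Finset.Icc (i+1) j, dd' lam p j) + partSize lam part i j

/-- The depth `d(Q) = Σ_{1 ≤ i ≤ j ≤ r} d^j_i(Q)` of a POP of rank `r`. -/
def depth (r : ℕ) (lam : ℕ → ℕ → ℤ) (part : ℕ → ℕ → ℕ → ℕ) : ℤ :=
  ∑ j ∈ Finset.Icc 1 r, ∑ i ∈ Finset.Icc 1 j, dji lam part i j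

/-- The `j`-th weight coordinate `a_j = Σ_{i=1}^j λ^j_i − Σ_{i=1}^{j−1} λ^{j−1}_i`
of a triangular array. -/
def wtCoord (lam : ℕ → ℕ → ℤ) (j : ℕ) : ℤ :=
  (∑ i ∈ Finset.Icc 1 j, lam j i) - ∑ i ∈ Finset.Icc 1 (j-1), lam (j-1) i

/-- The triangular area `△(P) = Σ_{1≤i≤j≤r} d_{i,j}·d'_{i,j}`. -/
def triArea (r : ℕ) (lam : ℕ → ℕ → ℤ) : ℤ :=
  ∑ j ∈ Finset.Icc 1 r, ∑ i ∈ Finset.Icc 1 j, dd lam i j * dd' lam i j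

/-- The trapezoidal area `□(P) = Σ_{1≤i≤j≤r} d_{i,j}·(Σ_{p=i}^j d'_{p,j})`. -/
def trapArea (r : ℕ) (lam : ℕ → ℕ → ℤ) : ℤ :=
  ∑ j ∈ Finset.Icc 1 r, ∑ i ∈ Finset.Icc 1 j,
    dd lam i j * (∑ p ∈ Finset.Icc i j, dd' lam p j)


lemma key13 (x y : ℕ → ℤ) : ∀ j : ℕ,
    2 * ∑ i ∈ Finset.Icc 1 j, (x i - y i) * (∑ p ∈ Finset.Icc i j, (y p - x (p+1)))
    = (∑ i ∈ Finset.Icc 1 (j+1), (x i)^2) - (∑ i ∈ Finset.Icc 1 j, (y i)^2)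
      - ((∑ i ∈ Finset.Icc 1 (j+1), x i) - ∑ i ∈ Finset.Icc 1 j, y i)^2 := by
  intro j
  induction j with
  | zero => simp
  | succ j ih =>
    have h1 : ∀ n : ℕ, 1 ≤ n + 1 := fun n => Nat.le_add_left 1 n
    have hinner : ∀ i ∈ Finset.Icc 1 j,
        (x i - y i) * (∑ p ∈ Finset.Icc i (j+1), (y p - x (p+1)))
        = (x i - y i) * (∑ p ∈ Finset.Icc i j, (y p - x (p+1)))
          + (x i - y i) * (y (j+1) - x (j+2)) := by
      intro i hi
      rw [Finset.sum_Icc_succ_top (le_trans (Finset.mem_Icc.mp hi).2 (Nat.le_succ j))]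
      ring
    simp only [Finset.sum_Icc_succ_top (h1 j), Finset.sum_Icc_succ_top (h1 (j+1))] at ih ⊢
    rw [Finset.sum_congr rfl hinner, Finset.sum_add_distrib, ← Finset.sum_mul,
      Finset.sum_sub_distrib]
    simp only [Finset.Icc_self, Finset.sum_singleton] at *
    linear_combination ih

/-- Let `P` be a GT pattern whose bounding row `(λ_1,…,λ_{r+1})`
satisfies `λ_{r+1} = 0`, with weight coordinates `a_1,…,a_{r+1}`.  Then
`□(P) = ½·(Σ_{p=1}^r λ_p² − Σ_{j=1}^{r+1} a_j²)`; moreover, for every POP `Q` with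
underlying pattern `P`, `□(P) = △(P) + d(Q) − Σ_{1≤i≤j≤r} |π(j)^i|`. -/
theorem statement13 (r : ℕ) (hr : 1 ≤ r) (P : GTPattern r)
    (hlast : P.lam (r+1) (r+1) = 0) :
    ((trapArea r P.lam : ℚ) = (1/2 : ℚ) *
        ((∑ p ∈ Finset.Icc 1 r, (P.lam (r+1) p : ℚ)^2) -
          ∑ j ∈ Finset.Icc 1 (r+1), (wtCoord P.lam j : ℚ)^2)) ∧
    (∀ Q : POP r, Q.toGTPattern = P →
      trapArea r P.lam = triArea r P.lam + depth r P.lam Q.part -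
        ∑ j ∈ Finset.Icc 1 r, ∑ i ∈ Finset.Icc 1 j, partSize P.lam Q.part i j) := by
  constructor
  · -- Part 1
    have hkey : ∀ j : ℕ,
        2 * (∑ i ∈ Finset.Icc 1 j, dd P.lam i j * ∑ p ∈ Finset.Icc i j, dd' P.lam p j)
        = (∑ i ∈ Finset.Icc 1 (j+1), (P.lam (j+1) i)^2)
          - (∑ i ∈ Finset.Icc 1 j, (P.lam j i)^2) - (wtCoord P.lam (j+1))^2 := by
      intro j
      have h := key13 (P.lam (j+1)) (P.lam j) j
      simp only [dd, dd', wtCoord, Nat.add_sub_cancel]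
      exact h
    have hZ : 2 * trapArea r P.lam
        = (∑ p ∈ Finset.Icc 1 r, (P.lam (r+1) p)^2)
          - ∑ j ∈ Finset.Icc 1 (r+1), (wtCoord P.lam j)^2 := by
      unfold trapArea
      rw [Finset.mul_sum, Finset.sum_congr rfl (fun j _ => hkey j)]
      have htel : ∑ j ∈ Finset.Icc 1 r,
          ((∑ i ∈ Finset.Icc 1 (j+1), (P.lam (j+1) i)^2)
            - (∑ i ∈ Finset.Icc 1 j, (P.lam j i)^2))
          = (∑ i ∈ Finset.Icc 1 (r+1), (P.lam (r+1) i)^2)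
            - (∑ i ∈ Finset.Icc 1 1, (P.lam 1 i)^2) := by
        rw [← Finset.Ico_add_one_right_eq_Icc, Finset.sum_Ico_eq_sum_range]
        simp only [Nat.succ_sub_one, Nat.add_comm 1]
        exact Finset.sum_range_sub
          (fun i => ∑ k ∈ Finset.Icc 1 (i+1), (P.lam (i+1) k)^2) r
      have hfr : ∑ i ∈ Finset.Icc 1 (r+1), (P.lam (r+1) i)^2
          = ∑ p ∈ Finset.Icc 1 r, (P.lam (r+1) p)^2 := by
        rw [Finset.sum_Icc_succ_top (by omega : (1:ℕ) ≤ r+1), hlast]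
        ring
      have hf1 : ∑ i ∈ Finset.Icc 1 1, (P.lam 1 i)^2 = (wtCoord P.lam 1)^2 := by
        simp [wtCoord]
      have hwt : ∑ j ∈ Finset.Icc 1 (r+1), (wtCoord P.lam j)^2
          = (wtCoord P.lam 1)^2 + ∑ j ∈ Finset.Icc 1 r, (wtCoord P.lam (j+1))^2 := by
        rw [← Finset.Ico_add_one_right_eq_Icc, Finset.sum_Ico_eq_sum_range,
          ← Finset.Ico_add_one_right_eq_Icc, Finset.sum_Ico_eq_sum_range]
        simp only [Nat.succ_sub_one, Nat.add_sub_cancel, Nat.add_comm 1]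
        rw [Finset.sum_range_succ']
        norm_num [add_comm]
      rw [Finset.sum_sub_distrib, htel, hfr, hf1, hwt]
      ring
    have hc := congrArg (fun z : ℤ => (z : ℚ)) hZ
    push_cast at hc
    linarith
  · -- Part 2
    intro Q _
    have e2 : depth r P.lam Q.part
        = (∑ j ∈ Finset.Icc 1 r, ∑ i ∈ Finset.Icc 1 j,
            dd P.lam i j * ∑ p ∈ Finset.Icc (i+1) j, dd' P.lam p j)
          + ∑ j ∈ Finset.Icc 1 r, ∑ i ∈ Finset.Icc 1 j, partSize P.lam Q.part i j := by
      unfold depth dji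
      simp only [Finset.sum_add_distrib]
    have e1 : trapArea r P.lam
        = triArea r P.lam + ∑ j ∈ Finset.Icc 1 r, ∑ i ∈ Finset.Icc 1 j,
            dd P.lam i j * ∑ p ∈ Finset.Icc (i+1) j, dd' P.lam p j := by
      unfold trapArea triArea
      rw [← Finset.sum_add_distrib]
      refine Finset.sum_congr rfl fun j _ => ?_
      rw [← Finset.sum_add_distrib]
      refine Finset.sum_congr rfl fun i hi => ?_
      rw [show Finset.Icc (i+1) j = Finset.Ioc i j from Finset.Icc_add_one_left_eq_Ioc i j,
        ← Finset.add_sum_Ioc_eq_sum_Icc (Finset.mem_Icc.mp hi).2]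
      ring
    rw [e1, e2]
    ring
end

section
/- Let 𝐏 be a POP whose pattern P has bounding sequence (λ_1 ≥ λ_2 ≥ … ≥ λ_r ≥ λ_{r+1} = 0), and let k ∈ ℤ_{≥0}. Then the shifted array P^k is again a GT pattern, its bounding sequence is (λ_1 + 2k, λ_2 + k, …, λ_r + k, 0) (the sequence associated to λ + kθ, where θ is the highest root), and every overlay partition π(j)^i of 𝐏 fits into the rectangle (d_{i,j}(P^k), d'_{i,j}(P^k)). Hence the pair 𝐏^k = (P^k, (π(j)^i)) is a POP with bounding sequence λ + kθ. -/
/-- Let `P` be a POP whose pattern has bounding sequence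
`(λ_1 ≥ … ≥ λ_r ≥ λ_{r+1} = 0)` and let `k ∈ ℤ_{≥0}`.  Then the shifted array `P^k` is
again a GT pattern, its bounding sequence is `(λ_1 + 2k, λ_2 + k, …, λ_r + k, 0)` (the
sequence associated to `λ + kθ`), and every overlay partition of `P` fits into the
rectangle `(d_{i,j}(P^k), d'_{i,j}(P^k))`; hence the shifted pattern together with the
same overlay partitions is a POP with bounding sequence `λ + kθ`. -/
theorem statement14 (r : ℕ) (hr : 1 ≤ r) (P : POP r)
    (hlast : P.lam (r+1) (r+1) = 0) (k : ℕ) :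
    ∃ Q : POP r, Q.lam = shiftFun P.lam k ∧ Q.part = P.part ∧
      Q.lam (r+1) 1 = P.lam (r+1) 1 + 2 * k ∧
      (∀ p : ℕ, 1 < p → p ≤ r → Q.lam (r+1) p = P.lam (r+1) p + k) ∧
      Q.lam (r+1) (r+1) = 0 := by
  refine ⟨⟨⟨shiftFun P.lam k, ?_, ?_⟩, P.part, P.part_antitone, ?_, ?_⟩, rfl, rfl, ?_, ?_, ?_⟩
  · intro i j h1 hij hjr
    have a := P.ineq₁ i j h1 hij hjr
    simp only [shiftFun]
    split_ifs <;> omega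
  · intro i j h1 hij hjr
    have a := P.ineq₂ i j h1 hij hjr
    have b := P.ineq₁ i j h1 hij hjr
    simp only [shiftFun]
    split_ifs <;> omega
  · intro i j h1 hij hjr u hu
    have h := P.part_le i j h1 hij hjr u hu
    simp only [dd', shiftFun] at h ⊢
    split_ifs <;> omega
  · intro i j h1 hij hjr u hu
    refine P.part_vanish i j h1 hij hjr u ?_
    simp only [dd, shiftFun] at hu ⊢
    split_ifs at hu <;> omega
  · simp only [shiftFun]
    rw [if_pos ⟨trivial, by omega⟩]
  · intro p hp hpr
    simp only [shiftFun]
    split_ifs <;> omega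
  · simp only [shiftFun]
    rw [if_neg (by omega), if_pos ⟨by omega, trivial⟩]
    exact hlast
end
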